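/- Let X and Y be finite, nonempty, disjoint subsets of ℝ^D, let p > 1, and set δ = min{κ(Y), d_E(X,Y)}. Then for every pair of points x, x' ∈ X with d_{X∪Y,p}(x,x') < δ^p, one has d_{X∪Y,p}(x,x') = d_{X,p}(x,x'); that is, below the threshold δ^p, the sample Fermat distance on X ∪ Y restricted to X coincides with the sample Fermat distance computed using X alone. -/

import Mathlib

/-- The cost of a polygonal path given by the list `l` of its vertices:
the sum over consecutive pairs of the `p`-th power of the Euclidean distance. -/
noncomputable def chainCost {D : ℕ} (p : ℝ) (l : List (EuclideanSpace ℝ (Fin D))) : ℝ :=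
  ((l.zip l.tail).map (fun q => dist q.1 q.2 ^ p)).sum

/-- The sample Fermat distance: `d_{S,p}(x,y)` is the infimum over all finite paths
`x = x₀, x₁, …, x_{r+1} = y` with interior points `x₁,…,x_r ∈ S` of
`Σ_{i=0}^{r} |x_{i+1} − x_i|^p`. -/
noncomputable def fermatDist {D : ℕ} (p : ℝ) (S : Finset (EuclideanSpace ℝ (Fin D)))
    (x y : EuclideanSpace ℝ (Fin D)) : ℝ :=
  sInf {c : ℝ | ∃ l : List (EuclideanSpace ℝ (Fin D)),
    (∀ z ∈ l, z ∈ S) ∧ c = chainCost p (x :: (l ++ [y]))}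

/-- The Euclidean distance `d_E(A,B) = min_{a ∈ A, b ∈ B} |a − b|` between finite sets. -/
noncomputable def setDistE {D : ℕ} (A B : Finset (EuclideanSpace ℝ (Fin D))) : ℝ :=
  sInf {d : ℝ | ∃ a ∈ A, ∃ b ∈ B, d = dist a b}

/-- The minimal spacing `κ(B) = min_{b ∈ B} d_E({b}, B∖{b})` of a finite set. -/
noncomputable def minSpacing {D : ℕ} (B : Finset (EuclideanSpace ℝ (Fin D))) : ℝ :=
  sInf {d : ℝ | ∃ b ∈ B, ∃ b' ∈ B, b ≠ b' ∧ d = dist b b'}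
noncomputable instance {D : ℕ} : DecidableEq (EuclideanSpace ℝ (Fin D)) := Classical.decEq _

lemma chainCost_nonneg {D : ℕ} (p : ℝ) (l : List (EuclideanSpace ℝ (Fin D))) :
    0 ≤ chainCost p l := by
  apply List.sum_nonneg
  intro a ha
  obtain ⟨q, _, rfl⟩ := List.mem_map.1 ha
  exact Real.rpow_nonneg dist_nonneg p

lemma exists_cross {D : ℕ} (X Y : Finset (EuclideanSpace ℝ (Fin D))) :
    ∀ (L : List (EuclideanSpace ℝ (Fin D))) (a : EuclideanSpace ℝ (Fin D)),
      a ∈ X → (∀ z ∈ L, z ∈ X ∪ Y) → (∃ z ∈ L, z ∈ Y) →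
      ∃ u v, u ∈ X ∧ v ∈ Y ∧ (u, v) ∈ (a :: L).zip L := by
  intro L
  induction L with
  | nil => rintro a _ _ ⟨z, hz, _⟩; simp at hz
  | cons b L' ih =>
    rintro a ha hmem ⟨z, hz, hzY⟩
    by_cases hbY : b ∈ Y
    · exact ⟨a, b, ha, hbY, by simp [List.zip]⟩
    · have hbX : b ∈ X := by
        have := hmem b List.mem_cons_self
        rcases Finset.mem_union.1 this with h | h
        · exact h
        · exact absurd h hbY
      have hz' : z ∈ L' := by
        rcases List.mem_cons.1 hz with rfl | h
        · exact absurd hzY hbY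
        · exact h
      obtain ⟨u, v, hu, hv, hmem'⟩ :=
        ih b hbX (fun w hw => hmem w (List.mem_cons_of_mem _ hw)) ⟨z, hz', hzY⟩
      refine ⟨u, v, hu, hv, ?_⟩
      simp only [List.zip_cons_cons, List.mem_cons]
      right
      exact hmem'

/-- below the threshold `δ^p`, with `δ = min{κ(Y), d_E(X,Y)}`, the sample
Fermat distance on `X ∪ Y` between points of `X` coincides with the one computed in `X`. -/
theorem fermatDist_below_threshold_eq {D : ℕ} (p : ℝ) (hp : 1 < p)
    (X Y : Finset (EuclideanSpace ℝ (Fin D)))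
    (hX : X.Nonempty) (hY : Y.Nonempty) (hdisj : Disjoint X Y)
    (x x' : EuclideanSpace ℝ (Fin D)) (hx : x ∈ X) (hx' : x' ∈ X)
    (hlt : fermatDist p (X ∪ Y) x x' < min (minSpacing Y) (setDistE X Y) ^ p) :
    fermatDist p (X ∪ Y) x x' = fermatDist p X x x' := by
  set δ := min (minSpacing Y) (setDistE X Y) with hδdef
  have hδ0 : 0 ≤ δ := by
    apply le_min
    · apply Real.sInf_nonneg
      rintro d ⟨b, _, b', _, _, rfl⟩
      exact dist_nonneg
    · apply Real.sInf_nonneg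
      rintro d ⟨a, _, b, _, rfl⟩
      exact dist_nonneg
  have hbdd : ∀ S : Finset (EuclideanSpace ℝ (Fin D)),
      BddBelow {c : ℝ | ∃ l : List (EuclideanSpace ℝ (Fin D)),
        (∀ z ∈ l, z ∈ S) ∧ c = chainCost p (x :: (l ++ [x']))} := by
    intro S
    refine ⟨0, ?_⟩
    rintro c ⟨l, _, rfl⟩
    exact chainCost_nonneg _ _
  have hne : ∀ S : Finset (EuclideanSpace ℝ (Fin D)),
      Set.Nonempty {c : ℝ | ∃ l : List (EuclideanSpace ℝ (Fin D)),
        (∀ z ∈ l, z ∈ S) ∧ c = chainCost p (x :: (l ++ [x']))} := by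
    intro S
    exact ⟨chainCost p (x :: (([] : List (EuclideanSpace ℝ (Fin D))) ++ [x'])), [],
      by simp, rfl⟩
  have heasy : fermatDist p (X ∪ Y) x x' ≤ fermatDist p X x x' := by
    apply csInf_le_csInf (hbdd (X ∪ Y)) (hne X)
    rintro c ⟨l, hl, rfl⟩
    exact ⟨l, fun z hz => Finset.mem_union_left _ (hl z hz), rfl⟩
  refine le_antisymm heasy ?_
  by_contra hcon
  push_neg at hcon
  obtain ⟨c, hcS, hclt⟩ := exists_lt_of_csInf_lt (hne (X ∪ Y)) (lt_min hlt hcon)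
  obtain ⟨l, hl, rfl⟩ := hcS
  rw [lt_min_iff] at hclt
  by_cases hall : ∀ z ∈ l, z ∈ X
  · have hmem : chainCost p (x :: (l ++ [x'])) ∈ {c : ℝ | ∃ l : List (EuclideanSpace ℝ (Fin D)),
        (∀ z ∈ l, z ∈ X) ∧ c = chainCost p (x :: (l ++ [x']))} := ⟨l, hall, rfl⟩
    have := csInf_le (hbdd X) hmem
    exact absurd this (not_le.2 hclt.2)
  · push_neg at hall
    obtain ⟨z, hz, hzX⟩ := hall
    have hzY : z ∈ Y := by
      rcases Finset.mem_union.1 (hl z hz) with h | h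
      · exact absurd h hzX
      · exact h
    obtain ⟨u, v, hu, hv, hpair⟩ := exists_cross X Y (l ++ [x']) x hx
      (by
        intro w hw
        rcases List.mem_append.1 hw with h | h
        · exact hl w h
        · simp at h
          subst h
          exact Finset.mem_union_left _ hx')
      ⟨z, List.mem_append_left _ hz, hzY⟩
    have hterm : dist u v ^ p ≤ chainCost p (x :: (l ++ [x'])) := by
      rw [chainCost, List.tail_cons]
      apply List.single_le_sum
      · intro a ha
        obtain ⟨q, _, rfl⟩ := List.mem_map.1 ha
        exact Real.rpow_nonneg dist_nonneg p
      · exact List.mem_map.2 ⟨(u, v), hpair, rfl⟩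
    have hδd : δ ≤ dist u v := by
      refine le_trans (min_le_right _ _) ?_
      apply csInf_le
      · refine ⟨0, ?_⟩
        rintro d ⟨a, _, b, _, rfl⟩
        exact dist_nonneg
      · exact ⟨u, hu, v, hv, rfl⟩
    have hpow : δ ^ p ≤ dist u v ^ p := Real.rpow_le_rpow hδ0 hδd (by linarith)
    have := hclt.1
    linarith
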